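/- Let n ≥ 1 and let F : (M_n(ℂ)_sa)^m → M_n(ℂ)_sa be a function that is L-Lipschitz with respect to the normalized Hilbert–Schmidt norm ‖a‖₂ = √(tr_n(a*a)) (where tr_n is the normalized trace) and equivariant under unitary conjugation: F(ux₁u*, …, uxₘu*) = uF(x₁,…,xₘ)u* for every unitary u ∈ M_n(ℂ). Then for every tuple (x₁,…,xₘ) of self-adjoint matrices, diam(Spec(F(x₁,…,xₘ))) ≤ L·(∑_{j=1}^m diam(Spec(x_j))²)^{1/2}. -/

import Mathlib

open scoped Matrix

/-- The normalized Hilbert–Schmidt norm `‖a‖₂ = √(tr_n(a* a))` on `n × n`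
complex matrices, where `tr_n = (1/n) Tr` is the normalized trace. -/
noncomputable def hsNorm {n : ℕ} (a : Matrix (Fin n) (Fin n) ℂ) : ℝ :=
  Real.sqrt ((Matrix.trace (aᴴ * a)).re / n)

namespace SpectralDiameterAux

open Matrix

variable {n : ℕ}

lemma vmv_mul_vmv (a b c d : Fin n → ℂ) :
    vecMulVec a b * vecMulVec c d = (b ⬝ᵥ c) • vecMulVec a d := by
  ext i j
  simp only [Matrix.mul_apply, vecMulVec_apply, Matrix.smul_apply, smul_eq_mul, dotProduct,
    Finset.sum_mul, Finset.mul_sum]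
  exact Finset.sum_congr rfl fun k _ => by ring

lemma trace_vmv (a b : Fin n → ℂ) : Matrix.trace (vecMulVec a b) = b ⬝ᵥ a := by
  simp [Matrix.trace, vecMulVec_apply, dotProduct, Matrix.diag, mul_comm]

lemma mul_vmv (y : Matrix (Fin n) (Fin n) ℂ) (a b : Fin n → ℂ) :
    y * vecMulVec a b = vecMulVec (y *ᵥ a) b := by
  ext i j
  simp [Matrix.mul_apply, vecMulVec_apply, Matrix.mulVec, dotProduct, Finset.sum_mul, mul_assoc]

lemma vmv_mul (y : Matrix (Fin n) (Fin n) ℂ) (a b : Fin n → ℂ) :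
    vecMulVec a b * y = vecMulVec a (b ᵥ* y) := by
  ext i j
  simp [Matrix.mul_apply, vecMulVec_apply, Matrix.vecMul, dotProduct, Finset.mul_sum, mul_assoc]

lemma conjT_vmv (a b : Fin n → ℂ) : (vecMulVec a (star b))ᴴ = vecMulVec b (star a) := by
  ext i j; simp [vecMulVec_apply, conjTranspose_apply, mul_comm]

lemma vmv_sub_right (a b c : Fin n → ℂ) :
    vecMulVec a (b - c) = vecMulVec a b - vecMulVec a c := by
  ext i j; simp [vecMulVec_apply, mul_sub]

lemma vmv_sub_left (a b c : Fin n → ℂ) :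
    vecMulVec (a - b) c = vecMulVec a c - vecMulVec b c := by
  ext i j; simp [vecMulVec_apply, sub_mul]

lemma vmv_smul_right (r : ℂ) (a b : Fin n → ℂ) :
    vecMulVec a (r • b) = r • vecMulVec a b := by
  ext i j; simp [vecMulVec_apply]; ring

lemma vmv_smul_left (r : ℂ) (a b : Fin n → ℂ) :
    vecMulVec (r • a) b = r • vecMulVec a b := by
  ext i j; simp [vecMulVec_apply]; ring

lemma D_eq (y : Matrix (Fin n) (Fin n) ℂ) (hy : y.IsHermitian) (e : Fin n → ℂ) :
    y - ((1 : Matrix (Fin n) (Fin n) ℂ) - (2:ℂ) • vecMulVec e (star e)) * y *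
        ((1 : Matrix (Fin n) (Fin n) ℂ) - (2:ℂ) • vecMulVec e (star e)) =
      (2:ℂ) • (vecMulVec e (star ((y *ᵥ e) - (star e ⬝ᵥ (y *ᵥ e)) • e))
        + vecMulVec ((y *ᵥ e) - (star e ⬝ᵥ (y *ᵥ e)) • e) (star e)) := by
  set w := y *ᵥ e with hw
  set α := star e ⬝ᵥ (y *ᵥ e) with hα
  have hsw : star w = star e ᵥ* y := by
    rw [hw, star_mulVec, hy.eq]
  have hα' : star α = star w ⬝ᵥ e := by
    rw [hα, star_dotProduct, star_star]
  have hαr : star α = α := by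
    rw [hα', hsw, ← dotProduct_mulVec, hα]
  have hPy : vecMulVec e (star e) * y = vecMulVec e (star w) := by
    rw [vmv_mul, hsw]
  have hyP : y * vecMulVec e (star e) = vecMulVec w (star e) := by
    rw [mul_vmv, hw]
  have expand : ((1 : Matrix (Fin n) (Fin n) ℂ) - (2:ℂ) • vecMulVec e (star e)) * y *
      ((1 : Matrix (Fin n) (Fin n) ℂ) - (2:ℂ) • vecMulVec e (star e)) =
      y - (2:ℂ) • (vecMulVec e (star e) * y) - (2:ℂ) • (y * vecMulVec e (star e))
        + (4:ℂ) • (vecMulVec e (star e) * y * vecMulVec e (star e)) := by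
    simp only [sub_mul, mul_sub, one_mul, mul_one, smul_mul_assoc, mul_smul_comm]
    module
  rw [expand, hPy, hyP]
  have hPyP : vecMulVec e (star w) * vecMulVec e (star e) = α • vecMulVec e (star e) := by
    rw [vmv_mul_vmv]
    congr 1
    rw [← hα', hαr]
  rw [hPyP]
  rw [star_sub, star_smul, vmv_sub_right, vmv_sub_left, vmv_smul_right, vmv_smul_left, hαr]
  module

lemma trace_sq_re_nonneg (b : Matrix (Fin n) (Fin n) ℂ) :
    0 ≤ (Matrix.trace (bᴴ * b)).re := by
  have : Matrix.trace (bᴴ * b) = ∑ j, ∑ k, (starRingEnd ℂ) (b k j) * (b k j) := by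
    simp [Matrix.trace, Matrix.diag, Matrix.mul_apply, conjTranspose_apply]
  rw [this]
  rw [Complex.re_sum]
  refine Finset.sum_nonneg fun j _ => ?_
  rw [Complex.re_sum]
  refine Finset.sum_nonneg fun k _ => ?_
  rw [mul_comm, Complex.mul_conj, Complex.ofReal_re]
  exact Complex.normSq_nonneg _

lemma hsNorm_sq (b : Matrix (Fin n) (Fin n) ℂ) :
    hsNorm b ^ 2 = (Matrix.trace (bᴴ * b)).re / n := by
  rw [hsNorm, Real.sq_sqrt]
  exact div_nonneg (trace_sq_re_nonneg b) (Nat.cast_nonneg n)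

lemma spectrum_eq_range (y : Matrix (Fin n) (Fin n) ℂ) (hy : y.IsHermitian) :
    spectrum ℂ y = Set.range (fun i => (hy.eigenvalues i : ℂ)) := by
  conv_lhs => rw [hy.spectral_theorem]
  rw [Unitary.conjStarAlgAut_apply, Unitary.spectrum_star_right_conjugate, spectrum_diagonal]
  rfl

lemma unit_dot (n : ℕ) (U : Matrix (Fin n) (Fin n) ℂ) (hU : star U * U = 1) (g : Fin n → ℂ) :
    star (U *ᵥ g) ⬝ᵥ (U *ᵥ g) = star g ⬝ᵥ g := by
  rw [star_mulVec, ← Matrix.dotProduct_mulVec, Matrix.mulVec_mulVec, ← Matrix.star_eq_conjTranspose,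
    hU, Matrix.one_mulVec]

lemma variance_bound (hn : 1 ≤ n) (y : Matrix (Fin n) (Fin n) ℂ) (hy : y.IsHermitian)
    (e : Fin n → ℂ) (he : star e ⬝ᵥ e = 1) :
    (star (y *ᵥ e - (star e ⬝ᵥ (y *ᵥ e)) • e) ⬝ᵥ (y *ᵥ e - (star e ⬝ᵥ (y *ᵥ e)) • e)).re
      ≤ (Metric.diam (spectrum ℂ y) / 2) ^ 2 := by
  have : Nonempty (Fin n) := Fin.pos_iff_nonempty.mp hn
  set ev := hy.eigenvalues with hev
  obtain ⟨iM, hiM⟩ := Finite.exists_max ev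
  obtain ⟨im, him⟩ := Finite.exists_min ev
  set d := Metric.diam (spectrum ℂ y) with hd
  have hd0 : 0 ≤ d := Metric.diam_nonneg
  have hbdd : Bornology.IsBounded (spectrum ℂ y) := by
    rw [spectrum_eq_range y hy]; exact (Set.finite_range _).isBounded
  have hspread : ev iM - ev im ≤ d := by
    have h1 : ((ev iM : ℂ)) ∈ spectrum ℂ y := by
      rw [spectrum_eq_range y hy]; exact Set.mem_range_self _
    have h2 : ((ev im : ℂ)) ∈ spectrum ℂ y := by
      rw [spectrum_eq_range y hy]; exact Set.mem_range_self _
    have := Metric.dist_le_diam_of_mem hbdd h1 h2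
    have hdist : dist ((ev iM : ℂ)) ((ev im : ℂ)) = |ev iM - ev im| := by
      rw [Complex.dist_of_im_eq] <;> simp [Real.dist_eq]
    rw [hdist] at this
    calc ev iM - ev im ≤ |ev iM - ev im| := le_abs_self _
      _ ≤ d := this
  set c : ℝ := (ev iM + ev im) / 2 with hc
  have hbd : ∀ i, |ev i - c| ≤ d / 2 := by
    intro i
    rw [abs_le]
    constructor <;> [linarith [him i, hiM i]; linarith [hiM i, him i]]
  set α := star e ⬝ᵥ (y *ᵥ e) with hα
  set w := y *ᵥ e with hw
  set v := w - α • e with hv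
  have hev0 : star e ⬝ᵥ v = 0 := by
    rw [hv, dotProduct_sub, dotProduct_smul, he, smul_eq_mul, mul_one, hα, hw, sub_self]
  have hve0 : star v ⬝ᵥ e = 0 := by
    rw [star_dotProduct, hev0, star_zero]
  set z := y - (c : ℂ) • (1 : Matrix (Fin n) (Fin n) ℂ) with hz
  have hze : z *ᵥ e = v + (α - c) • e := by
    rw [hz, Matrix.sub_mulVec, Matrix.smul_mulVec, Matrix.one_mulVec, hv, ← hw]
    ext i
    simp [sub_smul]
  have stepA : (star v ⬝ᵥ v).re ≤ (star (z *ᵥ e) ⬝ᵥ (z *ᵥ e)).re := by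
    rw [hze]
    have expand : star (v + (α - c) • e) ⬝ᵥ (v + (α - c) • e)
        = star v ⬝ᵥ v + (star (α - c) * (α - c)) * (star e ⬝ᵥ e)
          + (α - c) * (star v ⬝ᵥ e) + star (α - c) * (star e ⬝ᵥ v) := by
      rw [star_add, star_smul]
      simp only [add_dotProduct, dotProduct_add, smul_dotProduct, dotProduct_smul,
        smul_eq_mul]
      ring
    rw [expand, hve0, hev0, he, mul_zero, mul_zero, add_zero, add_zero, mul_one]
    rw [Complex.add_re]
    have : 0 ≤ (star (α - c) * (α - c)).re := by
      rw [Complex.star_def, mul_comm, Complex.mul_conj, Complex.ofReal_re]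
      exact Complex.normSq_nonneg _
    linarith
  refine stepA.trans ?_
  set U := (hy.eigenvectorUnitary : Matrix (Fin n) (Fin n) ℂ) with hU
  have hU1 : star U * U = 1 := by
    exact_mod_cast Unitary.coe_star_mul_self hy.eigenvectorUnitary
  have hU2 : U * star U = 1 := by
    exact_mod_cast Unitary.coe_mul_star_self hy.eigenvectorUnitary
  have hdiag : diagonal (RCLike.ofReal ∘ ev) - (c : ℂ) • (1 : Matrix (Fin n) (Fin n) ℂ)
      = diagonal (fun i => ((ev i - c : ℝ) : ℂ)) := by
    ext i j
    rcases eq_or_ne i j with rfl | h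
    · simp [Complex.ofReal_sub]
    · simp [Matrix.one_apply_ne h, Matrix.diagonal_apply_ne _ h]
  have hzspec : z = U * diagonal (fun i => ((ev i - c : ℝ) : ℂ)) * star U := by
    have h1 : y = U * diagonal (RCLike.ofReal ∘ ev) * star U := hy.spectral_theorem
    have h2 : (c : ℂ) • (1 : Matrix (Fin n) (Fin n) ℂ)
        = U * ((c : ℂ) • (1 : Matrix (Fin n) (Fin n) ℂ)) * star U := by
      rw [Matrix.mul_smul, Matrix.smul_mul, mul_one, hU2]
    rw [hz]
    conv_lhs => rw [h1, h2]
    rw [← Matrix.sub_mul, ← Matrix.mul_sub, hdiag]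
  set f := star U *ᵥ e with hf
  have hf1 : star f ⬝ᵥ f = 1 := by
    rw [hf, unit_dot n (star U) (by rwa [star_star]) e, he]
  have hzeU : z *ᵥ e = U *ᵥ (diagonal (fun i => ((ev i - c : ℝ) : ℂ)) *ᵥ f) := by
    rw [hzspec, hf, Matrix.mulVec_mulVec, Matrix.mulVec_mulVec]
  rw [hzeU, unit_dot n U hU1]
  set g := diagonal (fun i => ((ev i - c : ℝ) : ℂ)) *ᵥ f with hg
  have hgi : ∀ i, g i = ((ev i - c : ℝ) : ℂ) * f i := fun i => Matrix.mulVec_diagonal _ _ _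
  have hterm : ∀ i, (star (g i) * g i).re = (ev i - c) ^ 2 * Complex.normSq (f i) := by
    intro i
    have h3 : star (g i) * g i = ((Complex.normSq (g i) : ℝ) : ℂ) := by
      rw [Complex.star_def, mul_comm, Complex.mul_conj]
    rw [h3, Complex.ofReal_re, hgi i, Complex.normSq_mul, Complex.normSq_ofReal]
    ring
  have hsum : (star g ⬝ᵥ g).re = ∑ i, (ev i - c) ^ 2 * Complex.normSq (f i) := by
    rw [dotProduct, Complex.re_sum]
    exact Finset.sum_congr rfl fun i _ => hterm i
  rw [hsum]
  have hfsum : ∑ i, Complex.normSq (f i) = 1 := by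
    have h4 : (star f ⬝ᵥ f).re = ∑ i, Complex.normSq (f i) := by
      rw [dotProduct, Complex.re_sum]
      refine Finset.sum_congr rfl fun i _ => ?_
      rw [Pi.star_apply, Complex.star_def, mul_comm, Complex.mul_conj, Complex.ofReal_re]
    rw [← h4, hf1, Complex.one_re]
  calc ∑ i, (ev i - c) ^ 2 * Complex.normSq (f i)
      ≤ ∑ i, (d / 2) ^ 2 * Complex.normSq (f i) := by
        refine Finset.sum_le_sum fun i _ => ?_
        refine mul_le_mul_of_nonneg_right ?_ (Complex.normSq_nonneg _)
        rw [← sq_abs]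
        exact pow_le_pow_left₀ (abs_nonneg _) (hbd i) 2
    _ = (d / 2) ^ 2 := by rw [← Finset.mul_sum, hfsum, mul_one]

lemma star_u (e : Fin n → ℂ) :
    star ((1 : Matrix (Fin n) (Fin n) ℂ) - (2:ℂ) • vecMulVec e (star e))
      = (1 : Matrix (Fin n) (Fin n) ℂ) - (2:ℂ) • vecMulVec e (star e) := by
  rw [star_sub, star_one, star_smul]
  congr 1
  rw [Matrix.star_eq_conjTranspose, conjT_vmv]
  norm_num

lemma u_mem (e : Fin n → ℂ) (he : star e ⬝ᵥ e = 1) :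
    ((1 : Matrix (Fin n) (Fin n) ℂ) - (2:ℂ) • vecMulVec e (star e))
      ∈ Matrix.unitaryGroup (Fin n) ℂ := by
  rw [Matrix.mem_unitaryGroup_iff']
  rw [star_u]
  have expand : ((1 : Matrix (Fin n) (Fin n) ℂ) - (2:ℂ) • vecMulVec e (star e)) *
      ((1 : Matrix (Fin n) (Fin n) ℂ) - (2:ℂ) • vecMulVec e (star e))
      = 1 - (4:ℂ) • vecMulVec e (star e)
        + (4:ℂ) • (vecMulVec e (star e) * vecMulVec e (star e)) := by
    simp only [sub_mul, mul_sub, one_mul, mul_one, smul_mul_assoc, mul_smul_comm]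
    module
  rw [expand, vmv_mul_vmv, he, one_smul]
  abel

lemma trace_B (e v : Fin n → ℂ) (he : star e ⬝ᵥ e = 1) (hev : star e ⬝ᵥ v = 0) :
    Matrix.trace ((vecMulVec e (star v) + vecMulVec v (star e))ᴴ
      * (vecMulVec e (star v) + vecMulVec v (star e))) = 2 * (star v ⬝ᵥ v) := by
  have hve : star v ⬝ᵥ e = 0 := by rw [star_dotProduct, hev, star_zero]
  rw [conjTranspose_add, conjT_vmv, conjT_vmv]
  rw [add_mul, mul_add, mul_add]
  rw [vmv_mul_vmv, vmv_mul_vmv, vmv_mul_vmv, vmv_mul_vmv]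
  simp only [trace_add, trace_smul, trace_vmv, he, hev, hve, smul_eq_mul]
  ring

lemma trace_D (y : Matrix (Fin n) (Fin n) ℂ) (hy : y.IsHermitian) (e : Fin n → ℂ)
    (he : star e ⬝ᵥ e = 1) :
    Matrix.trace ((y - ((1 : Matrix (Fin n) (Fin n) ℂ) - (2:ℂ) • vecMulVec e (star e)) * y *
        ((1 : Matrix (Fin n) (Fin n) ℂ) - (2:ℂ) • vecMulVec e (star e)))ᴴ *
      (y - ((1 : Matrix (Fin n) (Fin n) ℂ) - (2:ℂ) • vecMulVec e (star e)) * y *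
        ((1 : Matrix (Fin n) (Fin n) ℂ) - (2:ℂ) • vecMulVec e (star e))))
    = 8 * (star ((y *ᵥ e) - (star e ⬝ᵥ (y *ᵥ e)) • e) ⬝ᵥ ((y *ᵥ e) - (star e ⬝ᵥ (y *ᵥ e)) • e)) := by
  rw [D_eq y hy e]
  set v := (y *ᵥ e) - (star e ⬝ᵥ (y *ᵥ e)) • e with hv
  have hev0 : star e ⬝ᵥ v = 0 := by
    rw [hv, dotProduct_sub, dotProduct_smul, he, smul_eq_mul, mul_one, sub_self]
  have h1 : ((2:ℂ) • (vecMulVec e (star v) + vecMulVec v (star e)))ᴴ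
      = (2:ℂ) • (vecMulVec e (star v) + vecMulVec v (star e))ᴴ := by
    rw [Matrix.conjTranspose_smul]
    congr 1
    norm_num
  rw [h1, Matrix.smul_mul, Matrix.mul_smul, smul_smul, trace_smul, trace_B e v he hev0]
  simp only [smul_eq_mul]
  ring

lemma hsNorm_D_sq (y : Matrix (Fin n) (Fin n) ℂ) (hy : y.IsHermitian) (e : Fin n → ℂ)
    (he : star e ⬝ᵥ e = 1) :
    hsNorm (y - ((1 : Matrix (Fin n) (Fin n) ℂ) - (2:ℂ) • vecMulVec e (star e)) * y *
        ((1 : Matrix (Fin n) (Fin n) ℂ) - (2:ℂ) • vecMulVec e (star e))) ^ 2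
    = 8 * (star ((y *ᵥ e) - (star e ⬝ᵥ (y *ᵥ e)) • e) ⬝ᵥ
        ((y *ᵥ e) - (star e ⬝ᵥ (y *ᵥ e)) • e)).re / n := by
  rw [hsNorm_sq, trace_D y hy e he]
  congr 1
  rw [Complex.mul_re]
  norm_num

lemma gamma_eigen (a : Matrix (Fin n) (Fin n) ℂ) (ξ η : Fin n → ℂ)
    (hξξ : star ξ ⬝ᵥ ξ = 1) (hηη : star η ⬝ᵥ η = 1)
    (hξη : star ξ ⬝ᵥ η = 0) (hηξ : star η ⬝ᵥ ξ = 0)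
    (lam mu : ℝ) (hξ : a *ᵥ ξ = (lam : ℂ) • ξ) (hη : a *ᵥ η = (mu : ℂ) • η) :
    star (((Real.sqrt 2 / 2 : ℝ) : ℂ) • (ξ - η)) ⬝ᵥ (((Real.sqrt 2 / 2 : ℝ) : ℂ) • (ξ - η)) = 1 ∧
    star (a *ᵥ (((Real.sqrt 2 / 2 : ℝ) : ℂ) • (ξ - η))
        - (star (((Real.sqrt 2 / 2 : ℝ) : ℂ) • (ξ - η)) ⬝ᵥ
            (a *ᵥ (((Real.sqrt 2 / 2 : ℝ) : ℂ) • (ξ - η)))) • (((Real.sqrt 2 / 2 : ℝ) : ℂ) • (ξ - η)))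
      ⬝ᵥ (a *ᵥ (((Real.sqrt 2 / 2 : ℝ) : ℂ) • (ξ - η))
        - (star (((Real.sqrt 2 / 2 : ℝ) : ℂ) • (ξ - η)) ⬝ᵥ
            (a *ᵥ (((Real.sqrt 2 / 2 : ℝ) : ℂ) • (ξ - η)))) • (((Real.sqrt 2 / 2 : ℝ) : ℂ) • (ξ - η)))
      = (((lam - mu) ^ 2 / 4 : ℝ) : ℂ) := by
  set σ : ℂ := ((Real.sqrt 2 / 2 : ℝ) : ℂ) with hσ
  set e : Fin n → ℂ := σ • (ξ - η) with he
  have hσs : star σ = σ := by rw [Complex.star_def, hσ, Complex.conj_ofReal]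
  have h2 : ((Real.sqrt 2 : ℝ) : ℂ) * ((Real.sqrt 2 : ℝ) : ℂ) = 2 := by
    rw [← Complex.ofReal_mul, Real.mul_self_sqrt (by norm_num)]
    norm_num
  have hσ2 : σ * σ = 1 / 2 := by
    rw [hσ]
    push_cast
    linear_combination h2 / 4
  have hstar_e : star e = σ • (star ξ - star η) := by
    rw [he, star_smul, star_sub, hσs]
  have hae : a *ᵥ e = σ • ((lam : ℂ) • ξ - (mu : ℂ) • η) := by
    rw [he, Matrix.mulVec_smul, Matrix.mulVec_sub, hξ, hη]
  have he1 : star e ⬝ᵥ e = 1 := by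
    rw [hstar_e, he]
    simp only [smul_dotProduct, dotProduct_smul, sub_dotProduct, dotProduct_sub,
      hξξ, hηη, hξη, hηξ, smul_eq_mul]
    linear_combination 2 * hσ2
  refine ⟨he1, ?_⟩
  have hα : star e ⬝ᵥ (a *ᵥ e) = (((lam + mu) / 2 : ℝ) : ℂ) := by
    rw [hstar_e, hae]
    simp only [smul_dotProduct, dotProduct_smul, sub_dotProduct, dotProduct_sub,
      hξξ, hηη, hξη, hηξ, smul_eq_mul]
    push_cast
    linear_combination ((lam : ℂ) + mu) * hσ2
  rw [hα, hae]
  have hv : σ • ((lam : ℂ) • ξ - (mu : ℂ) • η) - (((lam + mu) / 2 : ℝ) : ℂ) • e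
      = ((Real.sqrt 2 / 2 * ((lam - mu) / 2) : ℝ) : ℂ) • (ξ + η) := by
    rw [he]
    funext i
    simp only [Pi.smul_apply, Pi.sub_apply, Pi.add_apply, smul_eq_mul, hσ]
    push_cast
    ring
  rw [hv]
  rw [star_smul, Complex.star_def, Complex.conj_ofReal, star_add]
  simp only [smul_dotProduct, dotProduct_smul, add_dotProduct, dotProduct_add,
    hξξ, hηη, hξη, hηξ, smul_eq_mul]
  push_cast
  linear_combination (((lam:ℂ) - mu)^2 / 8) * h2

lemma ortho_dot {n : ℕ} (b : OrthonormalBasis (Fin n) ℂ (EuclideanSpace ℂ (Fin n))) (i j : Fin n) :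
    star (⇑(b i) : Fin n → ℂ) ⬝ᵥ (⇑(b j) : Fin n → ℂ) = if i = j then 1 else 0 := by
  have := orthonormal_iff_ite.mp b.orthonormal i j
  rw [← this, PiLp.inner_apply]
  simp [dotProduct, mul_comm]

end SpectralDiameterAux

open Matrix SpectralDiameterAux in
theorem spectral_diameter_bound (n m : ℕ) (hn : 1 ≤ n) (L : ℝ)
    (F : (Fin m → Matrix (Fin n) (Fin n) ℂ) → Matrix (Fin n) (Fin n) ℂ)
    (hFsa : ∀ x : Fin m → Matrix (Fin n) (Fin n) ℂ,
      (∀ j, (x j).IsHermitian) → (F x).IsHermitian)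
    (hLip : ∀ x y : Fin m → Matrix (Fin n) (Fin n) ℂ,
      (∀ j, (x j).IsHermitian) → (∀ j, (y j).IsHermitian) →
      hsNorm (F x - F y) ≤ L * Real.sqrt (∑ j, hsNorm (x j - y j) ^ 2))
    (hEquiv : ∀ x : Fin m → Matrix (Fin n) (Fin n) ℂ,
      (∀ j, (x j).IsHermitian) → ∀ u : Matrix.unitaryGroup (Fin n) ℂ,
      F (fun j => (u : Matrix (Fin n) (Fin n) ℂ) * x j *
          star (u : Matrix (Fin n) (Fin n) ℂ)) =
        (u : Matrix (Fin n) (Fin n) ℂ) * F x *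
          star (u : Matrix (Fin n) (Fin n) ℂ))
    (x : Fin m → Matrix (Fin n) (Fin n) ℂ) (hx : ∀ j, (x j).IsHermitian) :
    Metric.diam (spectrum ℂ (F x)) ≤
      L * Real.sqrt (∑ j, Metric.diam (spectrum ℂ (x j)) ^ 2) := by
  classical
  have hn0 : (0:ℝ) < n := by exact_mod_cast hn
  have hnne : Nonempty (Fin n) := Fin.pos_iff_nonempty.mp hn
  set a := F x with haF
  have ha : a.IsHermitian := hFsa x hx
  set ev := ha.eigenvalues with hev
  obtain ⟨i₀, hi₀⟩ := Finite.exists_max ev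
  obtain ⟨i₁, hi₁⟩ := Finite.exists_min ev
  have hT0 : 0 ≤ ev i₀ - ev i₁ := by linarith [hi₀ i₁]
  have hdiam_le : Metric.diam (spectrum ℂ a) ≤ ev i₀ - ev i₁ := by
    apply Metric.diam_le_of_forall_dist_le hT0
    rintro z hz w hw
    rw [spectrum_eq_range a ha] at hz hw
    obtain ⟨i, rfl⟩ := hz
    obtain ⟨k, rfl⟩ := hw
    have hdist : dist ((ev i : ℂ)) ((ev k : ℂ)) = |ev i - ev k| := by
      rw [Complex.dist_of_im_eq] <;> simp [Real.dist_eq]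
    rw [hdist, abs_le]
    constructor <;> [linarith [hi₁ i, hi₀ k]; linarith [hi₀ i, hi₁ k]]
  have hsum_nonneg : 0 ≤ ∑ j, Metric.diam (spectrum ℂ (x j)) ^ 2 :=
    Finset.sum_nonneg fun j _ => sq_nonneg _
  -- nonnegativity of L when m > 0
  have hLm : 0 < m → 0 ≤ L := by
    intro hm
    have h1 : ∀ j : Fin m, ((x j) + 1).IsHermitian := fun j => (hx j).add Matrix.isHermitian_one
    have h2 := hLip x (fun j => x j + 1) hx h1
    have h3 : ∀ j : Fin m, hsNorm (x j - (x j + 1)) = 1 := by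
      intro j
      have hxy : x j - (x j + 1) = -1 := by abel
      rw [hxy, hsNorm]
      have h4 : ((-1 : Matrix (Fin n) (Fin n) ℂ))ᴴ * (-1) = 1 := by simp
      rw [h4, Matrix.trace_one]
      have h5 : ((Fintype.card (Fin n) : ℂ)).re = (n : ℝ) := by simp
      rw [h5, div_self (ne_of_gt hn0), Real.sqrt_one]
    have h6 : (∑ j : Fin m, hsNorm (x j - (fun j => x j + 1) j) ^ 2) = (m : ℝ) := by
      have : ∀ j : Fin m, hsNorm (x j - (fun j => x j + 1) j) ^ 2 = 1 := by
        intro j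
        simp only []
        rw [h3 j, one_pow]
      rw [Finset.sum_congr rfl fun j _ => this j]
      simp
    rw [h6] at h2
    have h7 : 0 ≤ hsNorm (F x - F fun j => x j + 1) := Real.sqrt_nonneg _
    have h8 : (0:ℝ) < Real.sqrt m := Real.sqrt_pos.mpr (by exact_mod_cast hm)
    nlinarith
  rcases eq_or_lt_of_le (hi₁ i₀) with heq | hlt
  · -- degenerate case: spectrum has one point
    have hd0 : Metric.diam (spectrum ℂ a) ≤ 0 := by
      rw [← heq] at hdiam_le
      simpa using hdiam_le
    refine hd0.trans ?_
    rcases Nat.eq_zero_or_pos m with hm | hm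
    · subst hm
      simp
    · exact mul_nonneg (hLm hm) (Real.sqrt_nonneg _)
  -- main case
  have hne : i₀ ≠ i₁ := by
    intro h
    rw [h] at hlt
    exact lt_irrefl _ hlt
  set ξ : Fin n → ℂ := ⇑(ha.eigenvectorBasis i₀) with hξdef
  set η : Fin n → ℂ := ⇑(ha.eigenvectorBasis i₁) with hηdef
  have hξξ : star ξ ⬝ᵥ ξ = 1 := by
    rw [hξdef]
    rw [ortho_dot ha.eigenvectorBasis i₀ i₀]
    simp
  have hηη : star η ⬝ᵥ η = 1 := by
    rw [hηdef, ortho_dot ha.eigenvectorBasis i₁ i₁]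
    simp
  have hξη : star ξ ⬝ᵥ η = 0 := by
    rw [hξdef, hηdef, ortho_dot ha.eigenvectorBasis i₀ i₁]
    simp [hne]
  have hηξ : star η ⬝ᵥ ξ = 0 := by
    rw [hξdef, hηdef, ortho_dot ha.eigenvectorBasis i₁ i₀]
    simp [hne.symm]
  have hξeig : a *ᵥ ξ = ((ev i₀ : ℝ) : ℂ) • ξ := by
    rw [hξdef]
    have := ha.mulVec_eigenvectorBasis i₀
    rw [this]
    funext i
    simp [Complex.real_smul, hev]
  have hηeig : a *ᵥ η = ((ev i₁ : ℝ) : ℂ) • η := by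
    rw [hηdef]
    have := ha.mulVec_eigenvectorBasis i₁
    rw [this]
    funext i
    simp [Complex.real_smul, hev]
  obtain ⟨he1, hγ⟩ := gamma_eigen a ξ η hξξ hηη hξη hηξ (ev i₀) (ev i₁) hξeig hηeig
  set e : Fin n → ℂ := ((Real.sqrt 2 / 2 : ℝ) : ℂ) • (ξ - η) with he_def
  set u : Matrix (Fin n) (Fin n) ℂ :=
    (1 : Matrix (Fin n) (Fin n) ℂ) - (2:ℂ) • vecMulVec e (star e) with hu_def
  have hu : u ∈ Matrix.unitaryGroup (Fin n) ℂ := u_mem e he1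
  have hustar : star u = u := star_u e
  set y : Fin m → Matrix (Fin n) (Fin n) ℂ := fun j => u * x j * star u with hy_def
  have hy : ∀ j, (y j).IsHermitian := by
    intro j
    have hyj : y j = u * x j * uᴴ := by
      rw [← Matrix.star_eq_conjTranspose]
    rw [hyj]
    exact Matrix.isHermitian_mul_mul_conjTranspose u (hx j)
  have hFy : F y = u * a * star u := hEquiv x hx ⟨u, hu⟩
  have key := hLip x y hx hy
  set T := ev i₀ - ev i₁ with hTdef
  set S := Real.sqrt (∑ j, Metric.diam (spectrum ℂ (x j)) ^ 2) with hSdef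
  have hLHS : hsNorm (F x - F y) = T * Real.sqrt (2 / n) := by
    have hFxy : F x - F y = a - u * a * u := by
      rw [hFy, hustar, ← haF]
    rw [hFxy]
    have h2 := hsNorm_D_sq a ha e he1
    rw [hγ, ← hu_def] at h2
    have h3 : hsNorm (a - u * a * u) ^ 2 = T ^ 2 * (2 / n) := by
      rw [h2, Complex.ofReal_re]
      field_simp
      ring
    have hnn : 0 ≤ hsNorm (a - u * a * u) := Real.sqrt_nonneg _
    rw [← Real.sqrt_sq hnn, h3, Real.sqrt_mul (sq_nonneg _), Real.sqrt_sq hT0]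
  have hterm : ∀ j, hsNorm (x j - y j) ^ 2 ≤ 2 / n * Metric.diam (spectrum ℂ (x j)) ^ 2 := by
    intro j
    have h1 : x j - y j = x j - u * x j * u := by rw [hy_def]; simp only []; rw [hustar]
    rw [h1, hu_def, hsNorm_D_sq (x j) (hx j) e he1]
    have h2 := variance_bound hn (x j) (hx j) e he1
    calc 8 * (star ((x j *ᵥ e) - (star e ⬝ᵥ (x j *ᵥ e)) • e) ⬝ᵥ
            ((x j *ᵥ e) - (star e ⬝ᵥ (x j *ᵥ e)) • e)).re / (n : ℝ)
        ≤ 8 * ((Metric.diam (spectrum ℂ (x j)) / 2) ^ 2) / (n : ℝ) := by gcongr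
      _ = 2 / n * Metric.diam (spectrum ℂ (x j)) ^ 2 := by ring
  have hSig : Real.sqrt (∑ j, hsNorm (x j - y j) ^ 2) ≤ Real.sqrt (2 / n) * S := by
    have h4 : ∑ j, hsNorm (x j - y j) ^ 2
        ≤ 2 / n * ∑ j, Metric.diam (spectrum ℂ (x j)) ^ 2 := by
      rw [Finset.mul_sum]
      exact Finset.sum_le_sum fun j _ => hterm j
    calc Real.sqrt (∑ j, hsNorm (x j - y j) ^ 2)
        ≤ Real.sqrt (2 / n * ∑ j, Metric.diam (spectrum ℂ (x j)) ^ 2) := Real.sqrt_le_sqrt h4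
      _ = Real.sqrt (2 / n) * S := by
          rw [hSdef, Real.sqrt_mul (by positivity)]
  have hstep : L * Real.sqrt (∑ j, hsNorm (x j - y j) ^ 2)
      ≤ L * (Real.sqrt (2 / n) * S) := by
    rcases Nat.eq_zero_or_pos m with hm | hm
    · subst hm
      rw [hSdef]
      simp
    · exact mul_le_mul_of_nonneg_left hSig (hLm hm)
  have hmain : T * Real.sqrt (2 / n) ≤ (L * S) * Real.sqrt (2 / n) := by
    calc T * Real.sqrt (2 / n) = hsNorm (F x - F y) := hLHS.symm
      _ ≤ L * Real.sqrt (∑ j, hsNorm (x j - y j) ^ 2) := key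
      _ ≤ L * (Real.sqrt (2 / n) * S) := hstep
      _ = (L * S) * Real.sqrt (2 / n) := by ring
  have hpos : 0 < Real.sqrt (2 / n) := Real.sqrt_pos.mpr (by positivity)
  exact hdiam_le.trans (le_of_mul_le_mul_right hmain hpos)
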